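/- Let α be a graphic degree sequence of length n with α_n ≥ 1. If α has at least one forced edge or at least one forbidden edge, then every realization G of α is maximally edge-connected: G is connected, and for every set D of edges of G with |D| < α_n, the graph obtained from G by deleting the edges in D is still connected (hence the edge connectivity of G equals the minimum degree α_n). -/

import Mathlib

/-- `G` is a (labeled) realization of the degree sequence `α` if the degree of
vertex `v` in `G` equals `α v` for every `v`. -/
def IsRealization {n : ℕ} (α : Fin n → ℕ) (G : SimpleGraph (Fin n)) : Prop :=
  ∀ v : Fin n, (G.neighborSet v).ncard = α v

/-- A sequence is graphic if it has a realization. -/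
def Graphic {n : ℕ} (α : Fin n → ℕ) : Prop :=
  ∃ G : SimpleGraph (Fin n), IsRealization α G

/-- The edge `{i,j}` is forced for `α` if it lies in every realization of `α`. -/
def ForcedEdge {n : ℕ} (α : Fin n → ℕ) (i j : Fin n) : Prop :=
  ∀ G : SimpleGraph (Fin n), IsRealization α G → G.Adj i j

/-- The edge `{i,j}` is forbidden for `α` if it lies in no realization of `α`. -/
def ForbiddenEdge {n : ℕ} (α : Fin n → ℕ) (i j : Fin n) : Prop :=
  ∀ G : SimpleGraph (Fin n), IsRealization α G → ¬ G.Adj i j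

/-- `α` majorizes `β`: every partial sum of `α` is at least the corresponding
partial sum of `β`, and the total sums agree. -/
def Majorizes {n : ℕ} (α β : Fin n → ℕ) : Prop :=
  (∀ k : ℕ, k ≤ n →
    ∑ i ∈ Finset.univ.filter (fun i : Fin n => (i : ℕ) < k), β i ≤
    ∑ i ∈ Finset.univ.filter (fun i : Fin n => (i : ℕ) < k), α i) ∧
  ∑ i, α i = ∑ i, β i

namespace MEC

/-- The 2-switch: remove edges ab, cd; add edges ac, bd. -/
def swG {V : Type*} (G : SimpleGraph V) (a b c d : V) : SimpleGraph V where
  Adj x y := x ≠ y ∧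
    ((G.Adj x y ∧ ¬((x = a ∧ y = b) ∨ (x = b ∧ y = a)) ∧ ¬((x = c ∧ y = d) ∨ (x = d ∧ y = c))) ∨
      ((x = a ∧ y = c) ∨ (x = c ∧ y = a)) ∨ ((x = b ∧ y = d) ∨ (x = d ∧ y = b)))
  symm := by
    refine ⟨?_⟩
    rintro x y ⟨h1, h2⟩
    refine ⟨h1.symm, ?_⟩
    rcases h2 with ⟨hxy, hp, hq⟩ | h | h
    · exact Or.inl ⟨hxy.symm, by tauto, by tauto⟩
    · tauto
    · tauto
  loopless := ⟨fun x h => h.1 rfl⟩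

lemma swG_adj {V : Type*} (G : SimpleGraph V) (a b c d x y : V) :
    (swG G a b c d).Adj x y ↔ x ≠ y ∧
    ((G.Adj x y ∧ ¬((x = a ∧ y = b) ∨ (x = b ∧ y = a)) ∧ ¬((x = c ∧ y = d) ∨ (x = d ∧ y = c))) ∨
      ((x = a ∧ y = c) ∨ (x = c ∧ y = a)) ∨ ((x = b ∧ y = d) ∨ (x = d ∧ y = b))) := Iff.rfl

variable {V : Type*} {G : SimpleGraph V} {a b c d : V}

lemma swG_adj_ac (h1 : a ≠ c) : (swG G a b c d).Adj a c := by
  rw [swG_adj]; exact ⟨h1, Or.inr (Or.inl (Or.inl ⟨rfl, rfl⟩))⟩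

lemma swG_adj_bd (h4 : b ≠ d) : (swG G a b c d).Adj b d := by
  rw [swG_adj]; exact ⟨h4, Or.inr (Or.inr (Or.inl ⟨rfl, rfl⟩))⟩

lemma swG_not_adj_ab (h1 : a ≠ c) (h2 : a ≠ d) (h3 : b ≠ c) (h4 : b ≠ d) :
    ¬ (swG G a b c d).Adj a b := by
  rw [swG_adj]
  rintro ⟨h5, ⟨-, hp, -⟩ | (⟨-, h⟩ | ⟨h, -⟩) | (⟨h, -⟩ | ⟨h, -⟩)⟩
  · exact hp (Or.inl ⟨rfl, rfl⟩)
  · exact h3 h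
  · exact h1 h
  · exact h5 h
  · exact h2 h

lemma swG_adj_iff_of_ne {x y : V}
    (k1 : ¬(x = a ∧ y = b)) (k2 : ¬(x = b ∧ y = a))
    (k3 : ¬(x = c ∧ y = d)) (k4 : ¬(x = d ∧ y = c))
    (k5 : ¬(x = a ∧ y = c)) (k6 : ¬(x = c ∧ y = a))
    (k7 : ¬(x = b ∧ y = d)) (k8 : ¬(x = d ∧ y = b)) :
    (swG G a b c d).Adj x y ↔ G.Adj x y := by
  rw [swG_adj]
  constructor
  · rintro ⟨h1, ⟨hxy, -, -⟩ | (h | h) | (h | h)⟩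
    · exact hxy
    · exact absurd h k5
    · exact absurd h k6
    · exact absurd h k7
    · exact absurd h k8
  · intro h
    refine ⟨h.ne, Or.inl ⟨h, ?_, ?_⟩⟩
    · rintro (h' | h')
      · exact k1 h'
      · exact k2 h'
    · rintro (h' | h')
      · exact k3 h'
      · exact k4 h'

lemma swG_adj_iff_left {x y : V} (hx1 : x ≠ a) (hx2 : x ≠ b) (hx3 : x ≠ c) (hx4 : x ≠ d) :
    (swG G a b c d).Adj x y ↔ G.Adj x y := by
  apply swG_adj_iff_of_ne <;> rintro ⟨rfl, rfl⟩ <;> simp_all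

lemma swG_adj_iff_right {x y : V} (hy1 : y ≠ a) (hy2 : y ≠ b) (hy3 : y ≠ c) (hy4 : y ≠ d) :
    (swG G a b c d).Adj x y ↔ G.Adj x y := by
  apply swG_adj_iff_of_ne <;> rintro ⟨rfl, rfl⟩ <;> simp_all

lemma swG_nbr_a (hab : G.Adj a b) (hcd : G.Adj c d) (hac : ¬ G.Adj a c) (hbd : ¬ G.Adj b d)
    (h1 : a ≠ c) (h2 : a ≠ d) (h3 : b ≠ c) (h4 : b ≠ d) :
    (swG G a b c d).neighborSet a = insert c (G.neighborSet a \ {b}) := by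
  have hab' : a ≠ b := hab.ne
  have hcd' : c ≠ d := hcd.ne
  ext u
  simp only [SimpleGraph.mem_neighborSet, Set.mem_insert_iff, Set.mem_diff,
    Set.mem_singleton_iff]
  rw [swG_adj]
  constructor
  · rintro ⟨h5, ⟨hadj, hp, hq⟩ | ((⟨-, rfl⟩ | ⟨h, -⟩) | (⟨h, -⟩ | ⟨h, -⟩))⟩
    · refine Or.inr ⟨hadj, fun h => hp (Or.inl ⟨rfl, h⟩)⟩
    · exact Or.inl rfl
    · exact absurd h h1
    · exact absurd h hab'
    · exact absurd h h2
  · rintro (rfl | ⟨hadj, hub⟩)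
    · exact ⟨h1, Or.inr (Or.inl (Or.inl ⟨rfl, rfl⟩))⟩
    · refine ⟨hadj.ne, Or.inl ⟨hadj, ?_, ?_⟩⟩
      · rintro (⟨-, h⟩ | ⟨h, -⟩)
        · exact hub h
        · exact hab' h
      · rintro (⟨h, -⟩ | ⟨h, -⟩)
        · exact h1 h
        · exact h2 h

lemma swG_comm1' : swG G a b c d = swG G c d a b := by
  ext x y
  rw [swG_adj, swG_adj]
  constructor <;>
  · rintro ⟨h1, ⟨hxy, hp, hq⟩ | h | h⟩
    · exact ⟨h1, Or.inl ⟨hxy, hq, hp⟩⟩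
    · exact ⟨h1, Or.inr (Or.inl h.symm)⟩
    · exact ⟨h1, Or.inr (Or.inr h.symm)⟩

lemma swG_comm2' : swG G a b c d = swG G b a d c := by
  ext x y
  rw [swG_adj, swG_adj]
  constructor
  · rintro ⟨h1, ⟨hxy, hp, hq⟩ | h | h⟩
    · exact ⟨h1, Or.inl ⟨hxy, fun h' => hp h'.symm, fun h' => hq h'.symm⟩⟩
    · exact ⟨h1, Or.inr (Or.inr h)⟩
    · exact ⟨h1, Or.inr (Or.inl h)⟩
  · rintro ⟨h1, ⟨hxy, hp, hq⟩ | h | h⟩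
    · exact ⟨h1, Or.inl ⟨hxy, fun h' => hp h'.symm, fun h' => hq h'.symm⟩⟩
    · exact ⟨h1, Or.inr (Or.inr h)⟩
    · exact ⟨h1, Or.inr (Or.inl h)⟩

lemma swG_nbr_b (hab : G.Adj a b) (hcd : G.Adj c d) (hac : ¬ G.Adj a c) (hbd : ¬ G.Adj b d)
    (h1 : a ≠ c) (h2 : a ≠ d) (h3 : b ≠ c) (h4 : b ≠ d) :
    (swG G a b c d).neighborSet b = insert d (G.neighborSet b \ {a}) := by
  rw [swG_comm2']
  exact swG_nbr_a hab.symm hcd.symm hbd hac h4 h3 h2 h1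

lemma swG_nbr_c (hab : G.Adj a b) (hcd : G.Adj c d) (hac : ¬ G.Adj a c) (hbd : ¬ G.Adj b d)
    (h1 : a ≠ c) (h2 : a ≠ d) (h3 : b ≠ c) (h4 : b ≠ d) :
    (swG G a b c d).neighborSet c = insert a (G.neighborSet c \ {d}) := by
  rw [swG_comm1']
  exact swG_nbr_a hcd hab (fun h => hac h.symm) (fun h => hbd h.symm) h1.symm h3.symm h2.symm h4.symm

lemma swG_nbr_d (hab : G.Adj a b) (hcd : G.Adj c d) (hac : ¬ G.Adj a c) (hbd : ¬ G.Adj b d)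
    (h1 : a ≠ c) (h2 : a ≠ d) (h3 : b ≠ c) (h4 : b ≠ d) :
    (swG G a b c d).neighborSet d = insert b (G.neighborSet d \ {c}) := by
  rw [swG_comm1', swG_comm2']
  exact swG_nbr_a hcd.symm hab.symm (fun h => hbd h.symm) (fun h => hac h.symm)
    h4.symm h2.symm h3.symm h1.symm

lemma swG_nbr_other {v : Fin 0 ⊕ V} : True := trivial

lemma swG_nbr_of_ne {v : V} (hv1 : v ≠ a) (hv2 : v ≠ b) (hv3 : v ≠ c) (hv4 : v ≠ d) :
    (swG G a b c d).neighborSet v = G.neighborSet v := by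
  ext u
  simp only [SimpleGraph.mem_neighborSet]
  exact swG_adj_iff_left hv1 hv2 hv3 hv4

lemma exchange_ncard {W : Type*} [Finite W] {s : Set W} {x y : W} (hx : x ∉ s) (hy : y ∈ s) :
    (insert x (s \ {y})).ncard = s.ncard := by
  rw [Set.ncard_insert_of_notMem (fun h => hx h.1) (Set.toFinite _),
    Set.ncard_diff_singleton_add_one hy (Set.toFinite _)]

lemma swG_realization {n : ℕ} {α : Fin n → ℕ} {G : SimpleGraph (Fin n)}
    (hG : IsRealization α G) {a b c d : Fin n}
    (hab : G.Adj a b) (hcd : G.Adj c d) (hac : ¬ G.Adj a c) (hbd : ¬ G.Adj b d)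
    (h1 : a ≠ c) (h2 : a ≠ d) (h3 : b ≠ c) (h4 : b ≠ d) :
    IsRealization α (swG G a b c d) := by
  intro v
  by_cases hva : v = a
  · subst hva
    rw [swG_nbr_a hab hcd hac hbd h1 h2 h3 h4, exchange_ncard (show _ ∉ G.neighborSet _ from hac) (show _ ∈ G.neighborSet _ from hab)]
    exact hG v
  by_cases hvb : v = b
  · subst hvb
    rw [swG_nbr_b hab hcd hac hbd h1 h2 h3 h4, exchange_ncard (show _ ∉ G.neighborSet _ from hbd) (show _ ∈ G.neighborSet _ from hab.symm)]
    exact hG v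
  by_cases hvc : v = c
  · subst hvc
    rw [swG_nbr_c hab hcd hac hbd h1 h2 h3 h4,
      exchange_ncard (show _ ∉ G.neighborSet _ from fun h => hac h.symm) (show _ ∈ G.neighborSet _ from hcd)]
    exact hG v
  by_cases hvd : v = d
  · subst hvd
    rw [swG_nbr_d hab hcd hac hbd h1 h2 h3 h4,
      exchange_ncard (show _ ∉ G.neighborSet _ from fun h => hbd h.symm) (show _ ∈ G.neighborSet _ from hcd.symm)]
    exact hG v
  · rw [swG_nbr_of_ne hva hvb hvc hvd]
    exact hG v

section Counting

variable {n : ℕ} {α : Fin n → ℕ} {G : SimpleGraph (Fin n)}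

/-- Neighborhood as a Finset. -/
noncomputable def Nf (G : SimpleGraph (Fin n)) (v : Fin n) : Finset (Fin n) :=
  @Finset.filter _ (fun u => G.Adj v u) (Classical.decPred _) Finset.univ

lemma mem_Nf {v u : Fin n} : u ∈ Nf G v ↔ G.Adj v u := by
  rw [Nf]
  rw [@Finset.mem_filter _ _ (Classical.decPred _)]
  simp

lemma card_Nf (hG : IsRealization α G) (v : Fin n) : (Nf G v).card = α v := by
  have h : (G.neighborSet v) = ↑(Nf G v) := by
    ext u
    simp [mem_Nf, SimpleGraph.mem_neighborSet]
  rw [← hG v, h, Set.ncard_coe_finset]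

lemma side_card (hG : IsRealization α G) {δ : ℕ} (hδ : ∀ v, δ ≤ α v)
    {Df : Finset (Sym2 (Fin n))} (hc : Df.card < δ)
    (S : Finset (Fin n)) (hS : ∀ y ∈ S, ∀ u, u ∉ S → G.Adj y u → s(y, u) ∈ Df)
    (hne : S.Nonempty) : δ + 1 ≤ S.card := by
  classical
  by_contra hsmall
  push_neg at hsmall
  have hsmall' : S.card ≤ δ := by omega
  set fam := S.biUnion (fun y => (Nf G y \ S).image (fun u => s(y, u))) with hfamdef
  have hsub : fam ⊆ Df := by
    intro e he
    rw [hfamdef, Finset.mem_biUnion] at he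
    obtain ⟨y, hy, he⟩ := he
    rw [Finset.mem_image] at he
    obtain ⟨u, hu, rfl⟩ := he
    rw [Finset.mem_sdiff] at hu
    exact hS y hy u hu.2 (mem_Nf.1 hu.1)
  have hdisj : ∀ y ∈ S, ∀ z ∈ S, y ≠ z →
      Disjoint ((Nf G y \ S).image (fun u => s(y, u))) ((Nf G z \ S).image (fun u => s(z, u))) := by
    intro y hy z hz hyz
    rw [Finset.disjoint_left]
    intro e he1 he2
    rw [Finset.mem_image] at he1 he2
    obtain ⟨u, hu, rfl⟩ := he1
    obtain ⟨u', hu', he⟩ := he2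
    rw [Finset.mem_sdiff] at hu hu'
    rw [Sym2.eq_iff] at he
    rcases he with ⟨rfl, rfl⟩ | ⟨rfl, rfl⟩
    · exact hyz rfl
    · exact hu.2 hz
  have hcard : fam.card = ∑ y ∈ S, ((Nf G y \ S).image (fun u => s(y, u))).card :=
    Finset.card_biUnion hdisj
  have himg : ∀ y ∈ S, ((Nf G y \ S).image (fun u => s(y, u))).card = (Nf G y \ S).card := by
    intro y _
    apply Finset.card_image_of_injOn
    intro u hu u' hu' he
    rw [Finset.coe_sdiff, Set.mem_diff] at hu hu'
    rw [Sym2.eq_iff] at he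
    rcases he with ⟨-, h⟩ | ⟨h, -⟩
    · exact h
    · exfalso
      have : u' ∈ Nf G y := hu'.1
      rw [mem_Nf] at this
      exact this.ne (by rw [h])
  have hlb : ∀ y ∈ S, δ + 1 ≤ (Nf G y \ S).card + S.card := by
    intro y hy
    have e2 := Finset.card_inter_add_card_sdiff (Nf G y) S
    have e1 : (Nf G y ∩ S).card ≤ (S.erase y).card := by
      apply Finset.card_le_card
      intro u hu
      rw [Finset.mem_inter] at hu
      rw [Finset.mem_erase]
      exact ⟨fun h => ((mem_Nf.1 hu.1).ne (by rw [h])), hu.2⟩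
    have e1' : (S.erase y).card = S.card - 1 := Finset.card_erase_of_mem hy
    have e3 : δ ≤ α y := hδ y
    have e4 := card_Nf hG y
    have e5 : 1 ≤ S.card := Finset.card_pos.2 hne
    omega
  have hsum : S.card * (δ + 1) ≤ fam.card + S.card * S.card := by
    have t1 : ∑ _y ∈ S, (δ + 1) ≤ ∑ y ∈ S, ((Nf G y \ S).card + S.card) :=
      Finset.sum_le_sum hlb
    rw [Finset.sum_const, smul_eq_mul, Finset.sum_add_distrib, Finset.sum_const,
      smul_eq_mul] at t1
    rw [hcard]
    calc S.card * (δ + 1) ≤ (∑ y ∈ S, (Nf G y \ S).card) + S.card * S.card := t1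
    _ = (∑ y ∈ S, ((Nf G y \ S).image (fun u => s(y, u))).card) + S.card * S.card := by
        rw [Finset.sum_congr rfl himg]
  have hfam : fam.card ≤ Df.card := Finset.card_le_card hsub
  have e5 : 1 ≤ S.card := Finset.card_pos.2 hne
  nlinarith [hsum, hfam, hc, hsmall', e5]

lemma exists_crossless {n : ℕ} {α : Fin n → ℕ} {G : SimpleGraph (Fin n)}
    (hG : IsRealization α G) {δ : ℕ} (hδ : ∀ v, δ ≤ α v)
    {Df : Finset (Sym2 (Fin n))} (hc : Df.card < δ)
    (S : Finset (Fin n)) (hS : ∀ y ∈ S, ∀ u, u ∉ S → G.Adj y u → s(y, u) ∈ Df)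
    (hne : S.Nonempty) : ∃ v ∈ S, ∀ u, G.Adj v u → u ∈ S := by
  classical
  have hbig : δ + 1 ≤ S.card := side_card hG hδ hc S hS hne
  by_contra hno
  push_neg at hno
  have hno' : ∀ v, ∃ u, v ∈ S → G.Adj v u ∧ u ∉ S := by
    intro v
    by_cases hv : v ∈ S
    · obtain ⟨u, hu1, hu2⟩ := hno v hv
      exact ⟨u, fun _ => ⟨hu1, hu2⟩⟩
    · exact ⟨v, fun h => absurd h hv⟩
  choose f hf using hno'
  have hcard : S.card ≤ Df.card := by
    apply Finset.card_le_card_of_injOn (fun v => s(v, f v))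
    · intro v hv
      exact hS v hv (f v) (hf v hv).2 (hf v hv).1
    · intro v hv w hw he
      simp only at he
      rw [Sym2.eq_iff] at he
      rcases he with ⟨h, -⟩ | ⟨h, -⟩
      · exact h
      · exfalso
        rw [Finset.mem_coe] at hv hw
        exact (hf w hw).2 (h ▸ hv)
  omega

lemma cross_at_le {n : ℕ} {G : SimpleGraph (Fin n)}
    {Df : Finset (Sym2 (Fin n))} (S : Finset (Fin n))
    (hS : ∀ y ∈ S, ∀ u, u ∉ S → G.Adj y u → s(y, u) ∈ Df)
    (v : Fin n) (hv : v ∈ S) :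
    (@Finset.filter _ (fun u => u ∉ S) (Classical.decPred _) (Nf G v)).card ≤ Df.card := by
  classical
  apply Finset.card_le_card_of_injOn (fun u => s(v, u))
  · intro u hu
    rw [Finset.mem_coe, @Finset.mem_filter _ _ (Classical.decPred _)] at hu
    exact hS v hv u hu.2 (mem_Nf.1 hu.1)
  · intro u hu w hw he
    rw [Finset.mem_coe, @Finset.mem_filter _ _ (Classical.decPred _)] at hu hw
    rw [Sym2.eq_iff] at he
    rcases he with ⟨-, h⟩ | ⟨h1, h2⟩
    · exact h
    · exact h2.trans h1

lemma exists_nonadj {n : ℕ} {α : Fin n → ℕ} {G : SimpleGraph (Fin n)}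
    (hG : IsRealization α G) {δ : ℕ} (hδ : ∀ v, δ ≤ α v)
    (v q : Fin n) {Df : Finset (Sym2 (Fin n))} (hc : Df.card < δ)
    (hq : ∀ p, G.Adj v p → G.Adj q p → s(q, p) ∈ Df) :
    ∃ p, G.Adj v p ∧ ¬ G.Adj q p := by
  classical
  by_contra hno
  push_neg at hno
  have hcard : (Nf G v).card ≤ Df.card := by
    apply Finset.card_le_card_of_injOn (fun p => s(q, p))
    · intro p hp
      exact hq p (mem_Nf.1 hp) (hno p (mem_Nf.1 hp))
    · intro p hp p' hp' he
      simp only at he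
      rw [Sym2.eq_iff] at he
      rcases he with ⟨-, h⟩ | ⟨h1, h2⟩
      · exact h
      · exact h2.trans h1
  rw [card_Nf hG v] at hcard
  have := hδ v
  omega

end Counting

section Core

variable {n : ℕ} {α : Fin n → ℕ} {G : SimpleGraph (Fin n)}

lemma exists_nbr (hG : IsRealization α G) {δ : ℕ} (hδ1 : 1 ≤ δ) (hδ : ∀ v, δ ≤ α v) (v : Fin n) :
    ∃ u, G.Adj v u := by
  have : 0 < (Nf G v).card := by
    rw [card_Nf hG v]; exact lt_of_lt_of_le hδ1 (hδ v)
  obtain ⟨u, hu⟩ := Finset.card_pos.1 this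
  exact ⟨u, mem_Nf.1 hu⟩

lemma forb_no_cross_nbr {δ : ℕ} (hG : IsRealization α G) (hδ : ∀ v, δ ≤ α v)
    {Xf : Finset (Fin n)} {Df : Finset (Sym2 (Fin n))} (hc : Df.card < δ)
    (hD : ∀ x y, x ∈ Xf → y ∉ Xf → G.Adj x y → s(x, y) ∈ Df)
    {i' j' : Fin n} (hi' : i' ∈ Xf)
    (hC : ∀ x y, G.Adj i' x → G.Adj j' y → x ≠ y → G.Adj x y) :
    ∀ y0, G.Adj j' y0 → y0 ∈ Xf := by
  classical
  intro y0 hjy0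
  by_contra hy0
  have hF1sub : (Nf G i' \ Xf).image (fun u => s(i', u)) ⊆ Df := by
    intro e he
    rw [Finset.mem_image] at he
    obtain ⟨u, hu, rfl⟩ := he
    rw [Finset.mem_sdiff] at hu
    exact hD i' u hi' hu.2 (mem_Nf.1 hu.1)
  have hF2sub : (Nf G i' ∩ Xf).image (fun x => s(x, y0)) ⊆ Df := by
    intro e he
    rw [Finset.mem_image] at he
    obtain ⟨x, hx, rfl⟩ := he
    rw [Finset.mem_inter] at hx
    have hxy0 : x ≠ y0 := fun he' => hy0 (he' ▸ hx.2)
    exact hD x y0 hx.2 hy0 (hC x y0 (mem_Nf.1 hx.1) hjy0 hxy0)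
  have hdisj : Disjoint ((Nf G i' \ Xf).image (fun u => s(i', u)))
      ((Nf G i' ∩ Xf).image (fun x => s(x, y0))) := by
    rw [Finset.disjoint_left]
    intro e he1 he2
    rw [Finset.mem_image] at he1 he2
    obtain ⟨u, hu, rfl⟩ := he1
    obtain ⟨x, hx, he⟩ := he2
    rw [Finset.mem_sdiff] at hu
    rw [Finset.mem_inter] at hx
    rw [Sym2.eq_iff] at he
    rcases he with ⟨h1, -⟩ | ⟨-, h2⟩
    · exact (mem_Nf.1 hx.1).ne h1.symm
    · exact hy0 (by rw [h2]; exact hi')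
  have hc1 : ((Nf G i' \ Xf).image (fun u => s(i', u))).card = (Nf G i' \ Xf).card := by
    apply Finset.card_image_of_injOn
    intro u _ u' _ he
    rw [Sym2.eq_iff] at he
    rcases he with ⟨-, h⟩ | ⟨h1, h2⟩
    · exact h
    · exact h2.trans h1
  have hc2 : ((Nf G i' ∩ Xf).image (fun x => s(x, y0))).card = (Nf G i' ∩ Xf).card := by
    apply Finset.card_image_of_injOn
    intro x _ x' _ he
    rw [Sym2.eq_iff] at he
    rcases he with ⟨h, -⟩ | ⟨h1, h2⟩
    · exact h
    · exact h1.trans h2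
  have htot := Finset.card_le_card (Finset.union_subset hF1sub hF2sub)
  rw [Finset.card_union_of_disjoint hdisj, hc1, hc2] at htot
  have h3 := Finset.card_inter_add_card_sdiff (Nf G i') Xf
  rw [card_Nf hG i'] at h3
  have := hδ i'
  omega

lemma forbidden_bound (hG : IsRealization α G) {δ : ℕ} (hδ1 : 1 ≤ δ) (hδ : ∀ v, δ ≤ α v)
    {i j : Fin n} (hij : i ≠ j) (hfe : ForbiddenEdge α i j)
    {Xf : Finset (Fin n)} (hiX : i ∈ Xf) (hXc : Xfᶜ.Nonempty)
    {Df : Finset (Sym2 (Fin n))} (hc : Df.card < δ)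
    (hD : ∀ x y, x ∈ Xf → y ∉ Xf → G.Adj x y → s(x, y) ∈ Df) : False := by
  classical
  have hni : ¬ G.Adj i j := hfe G hG
  have hC1 : ∀ x y, G.Adj i x → G.Adj j y → x ≠ y → G.Adj x y := by
    intro x y hix hjy hxy
    by_contra hnadj
    have h2 : i ≠ y := by rintro rfl; exact hni hjy.symm
    have h3 : x ≠ j := by rintro rfl; exact hni hix
    have hG' := swG_realization hG hix hjy hni hnadj hij h2 h3 hxy
    exact hfe _ hG' (swG_adj_ac hij)
  have hSY : ∀ y ∈ Xfᶜ, ∀ u, u ∉ Xfᶜ → G.Adj y u → s(y, u) ∈ Df := by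
    intro y hy u hu hadj
    rw [Sym2.eq_swap]
    rw [Finset.mem_compl] at hy
    rw [Finset.mem_compl, not_not] at hu
    exact hD u y hu hy hadj.symm
  by_cases hjX : j ∈ Xf
  · -- Case A : both i and j in X
    have hNj : ∀ y0, G.Adj j y0 → y0 ∈ Xf := forb_no_cross_nbr hG hδ hc hD hiX hC1
    have hNi : ∀ y0, G.Adj i y0 → y0 ∈ Xf :=
      forb_no_cross_nbr hG hδ hc hD hjX
        (fun x y hjx hiy hxy => (hC1 y x hiy hjx hxy.symm).symm)
    obtain ⟨v, hvY, hvcr⟩ := exists_crossless hG hδ hc Xfᶜ hSY hXc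
    have hvX : v ∉ Xf := Finset.mem_compl.1 hvY
    obtain ⟨w, hvw⟩ := exists_nbr hG hδ1 hδ v
    have hwY : w ∈ Xfᶜ := hvcr w hvw
    have hwX : w ∉ Xf := Finset.mem_compl.1 hwY
    obtain ⟨u, hiu, hwu⟩ := exists_nonadj hG hδ i w hc
      (fun p hip hwp => by
        rw [Sym2.eq_swap]; exact hD p w (hNi p hip) hwX hwp.symm)
    have huX : u ∈ Xf := hNi u hiu
    have hiv : ¬ G.Adj i v := fun h => hvX (hNi v h)
    have huw : ¬ G.Adj u w := fun h => hwu h.symm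
    have d1 : i ≠ v := fun he => hvX (he ▸ hiX)
    have d2 : i ≠ w := fun he => hwX (he ▸ hiX)
    have d3 : u ≠ v := fun he => hvX (he ▸ huX)
    have d4 : u ≠ w := fun he => hwX (he ▸ huX)
    have hG1 := swG_realization hG hiu hvw hiv huw d1 d2 d3 d4
    obtain ⟨z, hjz⟩ := exists_nbr hG hδ1 hδ j
    have hzX : z ∈ Xf := hNj z hjz
    have hzi : z ≠ i := by rintro rfl; exact hni hjz.symm
    have hji : j ≠ i := hij.symm
    have hju : j ≠ u := by rintro rfl; exact hni hiu
    have hjv : j ≠ v := fun he => hvX (he ▸ hjX)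
    have hjw : j ≠ w := fun he => hwX (he ▸ hjX)
    have hG1iv : (swG G i u v w).Adj i v := swG_adj_ac d1
    have hG1jz : (swG G i u v w).Adj j z := (swG_adj_iff_left hji hju hjv hjw).2 hjz
    have hG1nij : ¬ (swG G i u v w).Adj i j := fun h =>
      hni ((swG_adj_iff_right hji hju hjv hjw).1 h)
    have hvz : ¬ G.Adj v z := fun h => (Finset.mem_compl.1 (hvcr z h)) hzX
    have hG1nvz : ¬ (swG G i u v w).Adj v z := by
      intro h
      apply hvz
      refine (swG_adj_iff_of_ne ?_ ?_ ?_ ?_ ?_ ?_ ?_ ?_).1 h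
      · rintro ⟨h', -⟩; exact d1 h'.symm
      · rintro ⟨h', -⟩; exact d3 h'.symm
      · rintro ⟨-, h'⟩; exact hwX (by rw [← h']; exact hzX)
      · rintro ⟨h', -⟩; exact hvw.ne h'
      · rintro ⟨h', -⟩; exact d1 h'.symm
      · rintro ⟨-, h'⟩; exact hzi h'
      · rintro ⟨h', -⟩; exact d3 h'.symm
      · rintro ⟨h', -⟩; exact hvw.ne h'
    have e2 : i ≠ z := hzi.symm
    have e3 : v ≠ j := hjv.symm
    have e4 : v ≠ z := fun he => hvX (he ▸ hzX)
    have hG2 := swG_realization hG1 hG1iv hG1jz hG1nij hG1nvz hij e2 e3 e4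
    exact hfe _ hG2 (swG_adj_ac hij)
  · -- Case B : j on the other side, pure counting
    have hF1sub : (Nf G i \ Xf).image (fun u => s(i, u)) ⊆ Df := by
      intro e he
      rw [Finset.mem_image] at he
      obtain ⟨u, hu, rfl⟩ := he
      rw [Finset.mem_sdiff] at hu
      exact hD i u hiX hu.2 (mem_Nf.1 hu.1)
    have hF2sub : (Nf G j ∩ Xf).image (fun x => s(x, j)) ⊆ Df := by
      intro e he
      rw [Finset.mem_image] at he
      obtain ⟨x, hx, rfl⟩ := he
      rw [Finset.mem_inter] at hx
      exact hD x j hx.2 hjX (mem_Nf.1 hx.1).symm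
    have hF3sub : ((Nf G i ∩ Xf) ×ˢ (Nf G j \ Xf)).image (fun p => s(p.1, p.2)) ⊆ Df := by
      intro e he
      rw [Finset.mem_image] at he
      obtain ⟨p, hp, rfl⟩ := he
      rw [Finset.mem_product, Finset.mem_inter, Finset.mem_sdiff] at hp
      have hne : p.1 ≠ p.2 := fun he' => hp.2.2 (he' ▸ hp.1.2)
      exact hD p.1 p.2 hp.1.2 hp.2.2 (hC1 p.1 p.2 (mem_Nf.1 hp.1.1) (mem_Nf.1 hp.2.1) hne)
    have hc1 : ((Nf G i \ Xf).image (fun u => s(i, u))).card = (Nf G i \ Xf).card := by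
      apply Finset.card_image_of_injOn
      intro u _ u' _ he
      rw [Sym2.eq_iff] at he
      rcases he with ⟨-, h⟩ | ⟨h1, h2⟩
      · exact h
      · exact h2.trans h1
    have hc2 : ((Nf G j ∩ Xf).image (fun x => s(x, j))).card = (Nf G j ∩ Xf).card := by
      apply Finset.card_image_of_injOn
      intro x _ x' _ he
      rw [Sym2.eq_iff] at he
      rcases he with ⟨h, -⟩ | ⟨h1, h2⟩
      · exact h
      · exact h1.trans h2
    have hc3 : (((Nf G i ∩ Xf) ×ˢ (Nf G j \ Xf)).image (fun p => s(p.1, p.2))).card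
        = (Nf G i ∩ Xf).card * (Nf G j \ Xf).card := by
      rw [Finset.card_image_of_injOn, Finset.card_product]
      intro p hp q hq he
      rw [Finset.mem_coe, Finset.mem_product, Finset.mem_inter, Finset.mem_sdiff] at hp hq
      rw [Sym2.eq_iff] at he
      rcases he with ⟨h1, h2⟩ | ⟨h1, h2⟩
      · exact Prod.ext h1 h2
      · exact absurd hp.1.2 (by rw [h1]; exact hq.2.2)
    have hd12 : Disjoint ((Nf G i \ Xf).image (fun u => s(i, u)))
        ((Nf G j ∩ Xf).image (fun x => s(x, j))) := by
      rw [Finset.disjoint_left]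
      intro e he1 he2
      rw [Finset.mem_image] at he1 he2
      obtain ⟨u, hu, rfl⟩ := he1
      obtain ⟨x, hx, he⟩ := he2
      rw [Finset.mem_sdiff] at hu
      rw [Finset.mem_inter] at hx
      rw [Sym2.eq_iff] at he
      rcases he with ⟨h1, h2⟩ | ⟨h1, h2⟩
      · exact hni (by rw [h2]; exact mem_Nf.1 hu.1)
      · exact hij h2.symm
    have hd13 : Disjoint ((Nf G i \ Xf).image (fun u => s(i, u)))
        (((Nf G i ∩ Xf) ×ˢ (Nf G j \ Xf)).image (fun p => s(p.1, p.2))) := by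
      rw [Finset.disjoint_left]
      intro e he1 he3
      rw [Finset.mem_image] at he1 he3
      obtain ⟨u, hu, rfl⟩ := he1
      obtain ⟨p, hp, he⟩ := he3
      rw [Finset.mem_sdiff] at hu
      rw [Finset.mem_product, Finset.mem_inter, Finset.mem_sdiff] at hp
      rw [Sym2.eq_iff] at he
      rcases he with ⟨h1, -⟩ | ⟨-, h2⟩
      · exact (mem_Nf.1 hp.1.1).ne h1.symm
      · refine hni ?_
        have : G.Adj j i := by rw [← h2]; exact mem_Nf.1 hp.2.1
        exact this.symm
    have hd23 : Disjoint ((Nf G j ∩ Xf).image (fun x => s(x, j)))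
        (((Nf G i ∩ Xf) ×ˢ (Nf G j \ Xf)).image (fun p => s(p.1, p.2))) := by
      rw [Finset.disjoint_left]
      intro e he2 he3
      rw [Finset.mem_image] at he2 he3
      obtain ⟨x, hx, rfl⟩ := he2
      obtain ⟨p, hp, he⟩ := he3
      rw [Finset.mem_inter] at hx
      rw [Finset.mem_product, Finset.mem_inter, Finset.mem_sdiff] at hp
      rw [Sym2.eq_iff] at he
      rcases he with ⟨-, h2⟩ | ⟨h1, -⟩
      · exact (mem_Nf.1 hp.2.1).ne h2.symm
      · exact hjX (by rw [← h1]; exact hp.1.2)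
    have htot : (Nf G i \ Xf).card + (Nf G j ∩ Xf).card
        + (Nf G i ∩ Xf).card * (Nf G j \ Xf).card ≤ Df.card := by
      have hsub := Finset.card_le_card (Finset.union_subset
        (Finset.union_subset hF1sub hF2sub) hF3sub)
      rwa [Finset.card_union_of_disjoint (Finset.disjoint_union_left.2 ⟨hd13, hd23⟩),
        Finset.card_union_of_disjoint hd12, hc1, hc2, hc3] at hsub
    have hi1 := Finset.card_inter_add_card_sdiff (Nf G i) Xf
    have hj1 := Finset.card_inter_add_card_sdiff (Nf G j) Xf
    rw [card_Nf hG i] at hi1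
    rw [card_Nf hG j] at hj1
    have hδi := hδ i
    have hδj := hδ j
    set A := (Nf G i \ Xf).card with hA'
    set B := (Nf G j ∩ Xf).card with hB'
    set P := (Nf G i ∩ Xf).card with hP'
    set Q := (Nf G j \ Xf).card with hQ'
    have hA : A < δ := by omega
    have hB : B < δ := by omega
    obtain ⟨m, hm⟩ : ∃ m, A + m = δ := ⟨δ - A, by omega⟩
    obtain ⟨k, hk⟩ : ∃ k, B + k = δ := ⟨δ - B, by omega⟩
    have hmP : m ≤ P := by omega
    have hkQ : k ≤ Q := by omega
    have hPQ : m * k ≤ P * Q := Nat.mul_le_mul hmP hkQ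
    have hm1 : 1 ≤ m := by omega
    have hk1 : 1 ≤ k := by omega
    have key : m + k ≤ m * k + 1 := by nlinarith
    linarith

lemma forced_bound (hG : IsRealization α G) {δ : ℕ} (hδ1 : 1 ≤ δ) (hδ : ∀ v, δ ≤ α v)
    {i j : Fin n} (hij : i ≠ j) (hfe : ForcedEdge α i j)
    {Xf : Finset (Fin n)} (hiX : i ∈ Xf) (hXc : Xfᶜ.Nonempty)
    {Df : Finset (Sym2 (Fin n))} (hc : Df.card < δ)
    (hD : ∀ x y, x ∈ Xf → y ∉ Xf → G.Adj x y → s(x, y) ∈ Df) : False := by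
  classical
  have hadjij : G.Adj i j := hfe G hG
  have hSX : ∀ y ∈ Xf, ∀ u, u ∉ Xf → G.Adj y u → s(y, u) ∈ Df :=
    fun y hy u hu hadj => hD y u hy hu hadj
  have hSY : ∀ y ∈ Xfᶜ, ∀ u, u ∉ Xfᶜ → G.Adj y u → s(y, u) ∈ Df := by
    intro y hy u hu hadj
    rw [Sym2.eq_swap]
    rw [Finset.mem_compl] at hy
    rw [Finset.mem_compl, not_not] at hu
    exact hD u y hu hy hadj.symm
  obtain ⟨w, hwY, hwcr⟩ := exists_crossless hG hδ hc Xfᶜ hSY hXc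
  have hwX : w ∉ Xf := Finset.mem_compl.1 hwY
  have hiw : i ≠ w := fun he => hwX (he ▸ hiX)
  have hniw : ¬ G.Adj i w := fun h => (Finset.mem_compl.1 (hwcr i h.symm)) hiX
  by_cases hjX : j ∈ Xf
  · -- Case A : both in X, single switch removes ij
    obtain ⟨y, hwy, hjy⟩ := exists_nonadj hG hδ w j hc
      (fun p hwp hjp => hD j p hjX (Finset.mem_compl.1 (hwcr p hwp)) hjp)
    have hyY : y ∈ Xfᶜ := hwcr y hwy
    have hyX : y ∉ Xf := Finset.mem_compl.1 hyY
    have hniy : ¬ G.Adj j y := hjy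
    have e1 : i ≠ w := hiw
    have e2 : i ≠ y := fun he => hyX (he ▸ hiX)
    have e3 : j ≠ w := fun he => hwX (he ▸ hjX)
    have e4 : j ≠ y := fun he => hyX (he ▸ hjX)
    have hG' := swG_realization hG hadjij hwy hniw hniy e1 e2 e3 e4
    exact swG_not_adj_ab e1 e2 e3 e4 (hfe _ hG')
  · -- Case B : j on the other side, two switches
    have hjY : j ∈ Xfᶜ := Finset.mem_compl.2 hjX
    obtain ⟨v, hvX, hvcr⟩ := exists_crossless hG hδ hc Xf
      (fun y hy u hu hadj => hD y u hy hu hadj) ⟨i, hiX⟩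
    have hvi : v ≠ i := by
      rintro rfl
      exact hjX (hvcr j hadjij)
    have hwj : w ≠ j := by
      rintro rfl
      exact (Finset.mem_compl.1 (hwcr i hadjij.symm)) hiX
    obtain ⟨q, hwq⟩ := exists_nbr hG hδ1 hδ w
    have hqY : q ∈ Xfᶜ := hwcr q hwq
    have hqX : q ∉ Xf := Finset.mem_compl.1 hqY
    obtain ⟨p, hvp, hnqp⟩ := exists_nonadj hG hδ v q hc
      (fun p hvp hqp => by
        rw [Sym2.eq_swap]; exact hD p q (hvcr p hvp) hqX hqp.symm)
    have hpX : p ∈ Xf := hvcr p hvp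
    -- switch 1 : swG G v p w q removes vp wq, adds vw pq
    have hnvw : ¬ G.Adj v w := fun h => hwX (hvcr w h)
    have hnpq : ¬ G.Adj p q := fun h => hnqp h.symm
    have f1 : v ≠ w := fun he => hwX (he ▸ hvX)
    have f2 : v ≠ q := fun he => hqX (he ▸ hvX)
    have f3 : p ≠ w := fun he => hwX (he ▸ hpX)
    have f4 : p ≠ q := fun he => hqX (he ▸ hpX)
    have hG1 := swG_realization hG hvp hwq hnvw hnpq f1 f2 f3 f4
    -- facts about G1 = swG G v p w q
    have hjv : j ≠ v := fun he => hjX (he ▸ hvX)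
    have hjw : j ≠ w := hwj.symm
    have hjq : (True : Prop) := trivial
    have hiq : i ≠ q := fun he => hqX (he ▸ hiX)
    have hG1ij : (swG G v p w q).Adj i j := by
      refine (swG_adj_iff_of_ne ?_ ?_ ?_ ?_ ?_ ?_ ?_ ?_).2 hadjij
      · rintro ⟨h', -⟩; exact hvi h'.symm
      · rintro ⟨-, h'⟩; exact hjv h'
      · rintro ⟨h', -⟩; exact hiw h'
      · rintro ⟨h', -⟩; exact hiq h'
      · rintro ⟨h', -⟩; exact hvi h'.symm
      · rintro ⟨h', -⟩; exact hiw h'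
      · rintro ⟨rfl, rfl⟩; exact hnqp hadjij.symm
      · rintro ⟨h', -⟩; exact hiq h'
    have hG1wv : (swG G v p w q).Adj w v := (swG_adj_ac f1).symm
    have hG1niw : ¬ (swG G v p w q).Adj i w := by
      intro h
      apply hniw
      refine (swG_adj_iff_of_ne ?_ ?_ ?_ ?_ ?_ ?_ ?_ ?_).1 h
      · rintro ⟨h', -⟩; exact hvi h'.symm
      · rintro ⟨-, h'⟩; exact f1 h'.symm
      · rintro ⟨h', -⟩; exact hiw h'
      · rintro ⟨h', -⟩; exact hiq h'
      · rintro ⟨h', -⟩; exact hvi h'.symm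
      · rintro ⟨h', -⟩; exact hiw h'
      · rintro ⟨-, h'⟩; exact hwq.ne h'
      · rintro ⟨h', -⟩; exact hiq h'
    have hnjv : ¬ G.Adj j v := fun h => hjX (hvcr j h.symm)
    have hG1njv : ¬ (swG G v p w q).Adj j v := by
      intro h
      apply hnjv
      refine (swG_adj_iff_of_ne ?_ ?_ ?_ ?_ ?_ ?_ ?_ ?_).1 h
      · rintro ⟨h', -⟩; exact hjv h'
      · rintro ⟨h', -⟩; exact hjX (h' ▸ hpX)
      · rintro ⟨h', -⟩; exact hwj h'.symm
      · rintro ⟨-, h'⟩; exact f1 h'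
      · rintro ⟨h', -⟩; exact hjv h'
      · rintro ⟨h', -⟩; exact hwj h'.symm
      · rintro ⟨h', -⟩; exact hjX (h' ▸ hpX)
      · rintro ⟨-, h'⟩; exact hvp.ne h'
    -- switch 2 : swG G1 i j w v removes ij wv, adds iw jv
    have g1 : i ≠ w := hiw
    have g2 : i ≠ v := hvi.symm
    have g3 : j ≠ w := hwj.symm
    have g4 : j ≠ v := hjv
    have hG2 := swG_realization hG1 hG1ij hG1wv hG1niw hG1njv g1 g2 g3 g4
    exact swG_not_adj_ab g1 g2 g3 g4 (hfe _ hG2)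

end Core


lemma cut_bound {n : ℕ} {α : Fin n → ℕ} {G : SimpleGraph (Fin n)}
    (hG : IsRealization α G) {δ : ℕ} (hδ1 : 1 ≤ δ) (hδ : ∀ v, δ ≤ α v)
    (h : (∃ i j : Fin n, i ≠ j ∧ ForcedEdge α i j) ∨
         (∃ i j : Fin n, i ≠ j ∧ ForbiddenEdge α i j))
    (X : Set (Fin n)) (hX : X.Nonempty) (hXc : Xᶜ.Nonempty)
    {D : Set (Sym2 (Fin n))}
    (hD : ∀ x y, x ∈ X → y ∉ X → G.Adj x y → s(x, y) ∈ D) : δ ≤ D.ncard := by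
  classical
  by_contra hc
  push_neg at hc
  set Xf : Finset (Fin n) :=
    @Finset.filter _ (fun v => v ∈ X) (Classical.decPred _) Finset.univ with hXf
  have hmemX : ∀ v : Fin n, v ∈ Xf ↔ v ∈ X := by
    intro v
    rw [hXf, @Finset.mem_filter _ _ (Classical.decPred _)]
    simp
  have hDfin : D.Finite := Set.toFinite D
  have hmemD : ∀ e, e ∈ hDfin.toFinset ↔ e ∈ D := fun e => Set.Finite.mem_toFinset hDfin
  have hc' : hDfin.toFinset.card < δ := by
    rw [← Set.ncard_eq_toFinset_card D hDfin]
    exact hc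
  have hXcF : Xfᶜ.Nonempty := by
    obtain ⟨y, hy⟩ := hXc
    exact ⟨y, Finset.mem_compl.2 (fun h' => hy ((hmemX y).1 h'))⟩
  have hXF : Xf.Nonempty := ⟨hX.choose, (hmemX _).2 hX.choose_spec⟩
  have hDX : ∀ x y, x ∈ Xf → y ∉ Xf → G.Adj x y → s(x, y) ∈ hDfin.toFinset :=
    fun x y hx hy hadj =>
      (hmemD _).2 (hD x y ((hmemX x).1 hx) (fun h' => hy ((hmemX y).2 h')) hadj)
  have hDXc : ∀ x y, x ∈ Xfᶜ → y ∉ Xfᶜ → G.Adj x y → s(x, y) ∈ hDfin.toFinset := by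
    intro x y hx hy hadj
    rw [Sym2.eq_swap]
    have hy' : y ∈ Xf := by rwa [Finset.mem_compl, not_not] at hy
    exact hDX y x hy' (Finset.mem_compl.1 hx) hadj.symm
  have hXcc : Xfᶜᶜ.Nonempty := by rwa [compl_compl]
  rcases h with ⟨i, j, hij, hfe⟩ | ⟨i, j, hij, hfe⟩
  · by_cases hiX : i ∈ Xf
    · exact forced_bound hG hδ1 hδ hij hfe hiX hXcF hc' hDX
    · exact forced_bound hG hδ1 hδ hij hfe (Finset.mem_compl.2 hiX) hXcc hc' hDXc
  · by_cases hiX : i ∈ Xf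
    · exact forbidden_bound hG hδ1 hδ hij hfe hiX hXcF hc' hDX
    · exact forbidden_bound hG hδ1 hδ hij hfe (Finset.mem_compl.2 hiX) hXcc hc' hDXc

end MEC

/-- let `α` be a graphic nonincreasing degree sequence with
`α_n ≥ 1`.  If `α` has at least one forced edge or at least one forbidden edge,
then every realization `G` of `α` is maximally edge-connected: `G` is connected,
and removing any set of fewer than `α_n` edges of `G` leaves it connected. -/
theorem maximally_edge_connected {n : ℕ} (hn : 1 ≤ n) (α : Fin n → ℕ)
    (hα : Antitone α) (hb : ∀ v, α v ≤ n - 1) (hg : Graphic α)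
    (hmin : 1 ≤ α ⟨n - 1, by omega⟩)
    (h : (∃ i j : Fin n, i ≠ j ∧ ForcedEdge α i j) ∨
         (∃ i j : Fin n, i ≠ j ∧ ForbiddenEdge α i j))
    (G : SimpleGraph (Fin n)) (hG : IsRealization α G) :
    G.Connected ∧
      ∀ D : Set (Sym2 (Fin n)), D ⊆ G.edgeSet → D.ncard < α ⟨n - 1, by omega⟩ →
        (G.deleteEdges D).Connected := by
  classical
  have hδv : ∀ v, α ⟨n - 1, by omega⟩ ≤ α v := by
    intro v
    apply hα
    rw [Fin.le_def]
    have := v.isLt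
    simp only []
    omega
  have key : ∀ D : Set (Sym2 (Fin n)), D.ncard < α ⟨n - 1, by omega⟩ →
      (G.deleteEdges D).Connected := by
    intro D hDlt
    rw [SimpleGraph.connected_iff]
    refine ⟨?_, ⟨⟨0, by omega⟩⟩⟩
    intro u v
    by_contra hr
    have hu : u ∈ {w | (G.deleteEdges D).Reachable u w} := SimpleGraph.Reachable.refl u
    have hv : v ∈ {w | (G.deleteEdges D).Reachable u w}ᶜ := hr
    have hcut : ∀ x y, x ∈ {w | (G.deleteEdges D).Reachable u w} →
        y ∉ {w | (G.deleteEdges D).Reachable u w} → G.Adj x y → s(x, y) ∈ D := by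
      intro x y hx hy hadj
      by_contra hnD
      exact hy (hx.trans (SimpleGraph.Adj.reachable
        (SimpleGraph.deleteEdges_adj.2 ⟨hadj, hnD⟩)))
    have := MEC.cut_bound hG hmin hδv h _ ⟨u, hu⟩ ⟨v, hv⟩ hcut
    omega
  refine ⟨?_, fun D _ hDlt => key D hDlt⟩
  have h0 : (∅ : Set (Sym2 (Fin n))).ncard < α ⟨n - 1, by omega⟩ := by
    rw [Set.ncard_empty]
    omega
  have := key ∅ h0
  rwa [SimpleGraph.deleteEdges_empty] at this
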